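/- Fix l > 0. For each r > 0, set â_r = (l−2)·r, and let y_r, z_r : ℝ → ℝ be twice differentiable functions satisfying the Wente ODE system with parameter â_r together with the initial conditions y_r(0) = z_r(0) = 0, y_r'(0) = (1+r)·√(l·r), z_r'(0) = r·√(l·r + 1). Then for every ϵ ∈ (0,π) there exists r₀ > 0 such that for every r ∈ (0, r₀) there exists τ with |τ − π| < ϵ, y_r(τ) = z_r(τ), and y_r(u) > z_r(u) for all u ∈ (0,τ). -/

import Mathlib

set_option maxHeartbeats 1000000

/-- The Wente ODE system with parameter `ahat`, for twice differentiable `y`, `z`: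
`y'' = (ahat−1)y − 2y(y²−z²)`, `z'' = ahat·z − 2z(y²−z²)`. -/
def WenteSystem (ahat : ℝ) (y z : ℝ → ℝ) : Prop :=
  (∀ u : ℝ, DifferentiableAt ℝ y u) ∧ (∀ u : ℝ, DifferentiableAt ℝ (deriv y) u) ∧
  (∀ u : ℝ, DifferentiableAt ℝ z u) ∧ (∀ u : ℝ, DifferentiableAt ℝ (deriv z) u) ∧
  (∀ u : ℝ, deriv (deriv y) u = (ahat - 1) * y u - 2 * y u * ((y u) ^ 2 - (z u) ^ 2)) ∧
  (∀ u : ℝ, deriv (deriv z) u = ahat * z u - 2 * z u * ((y u) ^ 2 - (z u) ^ 2))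

open Set Real

/-- MVT-type bound on `[0,5]`. -/
lemma mvt_bound5 (g g' : ℝ → ℝ) (C : ℝ)
    (hd : ∀ u ∈ Icc (0:ℝ) 5, HasDerivAt g (g' u) u)
    (hb : ∀ u ∈ Icc (0:ℝ) 5, |g' u| ≤ C)
    (h0 : g 0 = 0) :
    ∀ u ∈ Icc (0:ℝ) 5, |g u| ≤ C * u := by
  intro u hu
  have h := Convex.norm_image_sub_le_of_norm_hasDerivWithin_le
    (f := g) (f' := g') (s := Icc (0:ℝ) 5) (C := C)
    (fun x hx => (hd x hx).hasDerivWithinAt)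
    (fun x hx => by simpa [Real.norm_eq_abs] using hb x hx)
    (convex_Icc _ _) (left_mem_Icc.2 (by norm_num)) hu
  rw [h0, sub_zero] at h
  simpa [Real.norm_eq_abs, abs_of_nonneg hu.1] using h

/-- Concavity lower bound for sin. -/
lemma sin_lower (β : ℝ) (hβ0 : 0 < β) (hβπ : β ≤ π) :
    ∀ u ∈ Icc (0:ℝ) β, Real.sin β / β * u ≤ Real.sin u := by
  intro u ⟨h0, hβ⟩
  have ht0 : 0 ≤ u / β := div_nonneg h0 hβ0.le
  have ht1 : u / β ≤ 1 := (div_le_one hβ0).2 hβ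
  have hc := strictConcaveOn_sin_Icc.concaveOn.2
    (show (0:ℝ) ∈ Icc 0 π from ⟨le_refl 0, pi_pos.le⟩)
    (show β ∈ Icc 0 π from ⟨hβ0.le, hβπ⟩)
    (show (0:ℝ) ≤ 1 - u / β by linarith)
    (show (0:ℝ) ≤ u / β from ht0) (by ring)
  simp only [smul_eq_mul, mul_zero, Real.sin_zero, zero_add] at hc
  have : u / β * β = u := by field_simp
  rw [this] at hc
  calc Real.sin β / β * u = u / β * Real.sin β := by ring
    _ ≤ Real.sin u := hc

/-- Comparison with `v * sin` for a forced oscillator. -/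
lemma linY (y : ℝ → ℝ) (v ε : ℝ)
    (hy : ∀ u : ℝ, DifferentiableAt ℝ y u)
    (hy' : ∀ u : ℝ, DifferentiableAt ℝ (deriv y) u)
    (h0 : y 0 = 0) (h1 : deriv y 0 = v)
    (hε : ∀ u ∈ Icc (0:ℝ) 5, |deriv (deriv y) u + y u| ≤ ε) :
    ∀ u ∈ Icc (0:ℝ) 5, |y u - v * Real.sin u| ≤ 2 * ε * u := by
  set p : ℝ → ℝ := fun u => y u - v * Real.sin u with hpdef
  set q : ℝ → ℝ := fun u => deriv y u - v * Real.cos u with hqdef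
  have hp : ∀ u : ℝ, HasDerivAt p (q u) u := fun u =>
    (hy u).hasDerivAt.sub ((Real.hasDerivAt_sin u).const_mul v)
  have hq : ∀ u : ℝ, HasDerivAt q (deriv (deriv y) u + v * Real.sin u) u := by
    intro u
    have h := (hy' u).hasDerivAt.sub ((Real.hasDerivAt_cos u).const_mul v)
    exact h.congr_deriv (by ring)
  set c₁ : ℝ → ℝ := fun u => q u * Real.sin u - p u * Real.cos u with hc₁def
  set c₂ : ℝ → ℝ := fun u => q u * Real.cos u + p u * Real.sin u with hc₂def
  have hc₁ : ∀ u : ℝ, HasDerivAt c₁ ((deriv (deriv y) u + y u) * Real.sin u) u := by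
    intro u
    have h := ((hq u).mul (Real.hasDerivAt_sin u)).sub ((hp u).mul (Real.hasDerivAt_cos u))
    refine h.congr_deriv ?_
    rw [show p u = y u - v * Real.sin u from rfl]
    ring
  have hc₂ : ∀ u : ℝ, HasDerivAt c₂ ((deriv (deriv y) u + y u) * Real.cos u) u := by
    intro u
    have h := ((hq u).mul (Real.hasDerivAt_cos u)).add ((hp u).mul (Real.hasDerivAt_sin u))
    refine h.congr_deriv ?_
    rw [show p u = y u - v * Real.sin u from rfl]
    ring
  have hb₁ : ∀ u ∈ Icc (0:ℝ) 5, |(deriv (deriv y) u + y u) * Real.sin u| ≤ ε := by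
    intro u hu
    rw [abs_mul]
    calc |deriv (deriv y) u + y u| * |Real.sin u| ≤ ε * 1 := by
          apply mul_le_mul (hε u hu) (Real.abs_sin_le_one u) (abs_nonneg _)
          exact le_trans (abs_nonneg _) (hε 0 (by norm_num))
      _ = ε := mul_one ε
  have hb₂ : ∀ u ∈ Icc (0:ℝ) 5, |(deriv (deriv y) u + y u) * Real.cos u| ≤ ε := by
    intro u hu
    rw [abs_mul]
    calc |deriv (deriv y) u + y u| * |Real.cos u| ≤ ε * 1 := by
          apply mul_le_mul (hε u hu) (Real.abs_cos_le_one u) (abs_nonneg _)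
          exact le_trans (abs_nonneg _) (hε 0 (by norm_num))
      _ = ε := mul_one ε
  have h10 : c₁ 0 = 0 := by simp [hc₁def, hpdef, hqdef, h0]
  have h20 : c₂ 0 = 0 := by simp [hc₂def, hpdef, hqdef, h1]
  have k₁ := mvt_bound5 c₁ (fun u => (deriv (deriv y) u + y u) * Real.sin u) ε
    (fun u _ => hc₁ u) hb₁ h10
  have k₂ := mvt_bound5 c₂ (fun u => (deriv (deriv y) u + y u) * Real.cos u) ε
    (fun u _ => hc₂ u) hb₂ h20
  intro u hu
  have hrec : p u = c₂ u * Real.sin u - c₁ u * Real.cos u := by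
    simp only [hc₁def, hc₂def]
    linear_combination (-(p u)) * Real.sin_sq_add_cos_sq u
  have : |p u| ≤ |c₂ u| + |c₁ u| := by
    rw [hrec]
    calc |c₂ u * Real.sin u - c₁ u * Real.cos u| ≤ |c₂ u * Real.sin u| + |c₁ u * Real.cos u| :=
          abs_sub _ _
      _ ≤ |c₂ u| + |c₁ u| := by
          rw [abs_mul, abs_mul]
          gcongr
          · exact le_trans (mul_le_mul_of_nonneg_left (Real.abs_sin_le_one u) (abs_nonneg _)) (by simp)
          · exact le_trans (mul_le_mul_of_nonneg_left (Real.abs_cos_le_one u) (abs_nonneg _)) (by simp)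
  calc |y u - v * Real.sin u| = |p u| := rfl
    _ ≤ |c₂ u| + |c₁ u| := this
    _ ≤ ε * u + ε * u := add_le_add (k₂ u hu) (k₁ u hu)
    _ = 2 * ε * u := by ring

/-- Comparison with the line `w₀ * u`. -/
lemma linZ (z : ℝ → ℝ) (w₀ ε : ℝ) (hε0 : 0 ≤ ε)
    (hz : ∀ u : ℝ, DifferentiableAt ℝ z u)
    (hz' : ∀ u : ℝ, DifferentiableAt ℝ (deriv z) u)
    (h0 : z 0 = 0) (h1 : deriv z 0 = w₀)
    (hε : ∀ u ∈ Icc (0:ℝ) 5, |deriv (deriv z) u| ≤ ε) :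
    ∀ u ∈ Icc (0:ℝ) 5, |z u - w₀ * u| ≤ 5 * ε * u := by
  have step1 := mvt_bound5 (fun u => deriv z u - w₀) (fun u => deriv (deriv z) u) ε
    (fun u _ => (hz' u).hasDerivAt.sub_const w₀) hε (by simp [h1])
  have hd2 : ∀ u ∈ Icc (0:ℝ) 5, HasDerivAt (fun u => z u - w₀ * u) (deriv z u - w₀) u := by
    intro u _
    have h2 : HasDerivAt (fun u : ℝ => w₀ * u) w₀ u := by
      simpa using (hasDerivAt_id u).const_mul w₀
    exact (hz u).hasDerivAt.sub h2
  have step2 := mvt_bound5 (fun u => z u - w₀ * u) (fun u => deriv z u - w₀) (5 * ε)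
    hd2 (fun u hu => le_trans (step1 u hu) (by nlinarith [hu.1, hu.2])) (by simp [h0])
  exact step2

/-- A priori bound on solutions of the Wente system on `[0,5]`. -/
lemma apriori (ah K δ : ℝ) (y z : ℝ → ℝ) (hs : WenteSystem ah y z)
    (hy0 : y 0 = 0) (hz0 : z 0 = 0)
    (hK : |ah - 1| + 5 ≤ K)
    (hy'0 : |deriv y 0| ≤ δ) (hz'0 : |deriv z 0| ≤ δ)
    (hsmall : δ * Real.exp (5 * K) ≤ 1 / 2) :
    ∀ u ∈ Icc (0:ℝ) 5,
      |y u| ≤ δ * Real.exp (5 * K) ∧ |deriv y u| ≤ δ * Real.exp (5 * K) ∧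
      |z u| ≤ δ * Real.exp (5 * K) ∧ |deriv z u| ≤ δ * Real.exp (5 * K) := by
  obtain ⟨hdy, hdy', hdz, hdz', hey, hez⟩ := hs
  set F : ℝ → ℝ × ℝ × ℝ × ℝ := fun u => (y u, deriv y u, z u, deriv z u) with hFdef
  set G : ℝ → ℝ × ℝ × ℝ × ℝ :=
    fun u => (deriv y u, deriv (deriv y) u, deriv z u, deriv (deriv z) u) with hGdef
  have hF : ∀ u : ℝ, HasDerivAt F (G u) u := fun u =>
    (hdy u).hasDerivAt.prodMk ((hdy' u).hasDerivAt.prodMk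
      ((hdz u).hasDerivAt.prodMk (hdz' u).hasDerivAt))
  have hFnorm : ∀ u : ℝ, ‖F u‖ = max |y u| (max |deriv y u| (max |z u| |deriv z u|)) := by
    intro u
    simp [hFdef, Prod.norm_def, Real.norm_eq_abs]
  have hGnorm : ∀ u : ℝ,
      ‖G u‖ = max |deriv y u| (max |deriv (deriv y) u| (max |deriv z u| |deriv (deriv z) u|)) := by
    intro u
    simp [hGdef, Prod.norm_def, Real.norm_eq_abs]
  have hKpos : (0:ℝ) < K := lt_of_lt_of_le (by positivity) hK
  have hδ : 0 ≤ δ := le_trans (abs_nonneg _) hy'0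
  have hcomp : ∀ u : ℝ, |y u| ≤ ‖F u‖ ∧ |deriv y u| ≤ ‖F u‖ ∧ |z u| ≤ ‖F u‖ ∧
      |deriv z u| ≤ ‖F u‖ := by
    intro u
    rw [hFnorm]
    refine ⟨le_max_left _ _, ?_, ?_, ?_⟩
    · exact le_trans (le_max_left _ _) (le_max_right _ _)
    · exact le_trans (le_trans (le_max_left _ _) (le_max_right _ _)) (le_max_right _ _)
    · exact le_trans (le_trans (le_max_right _ _) (le_max_right _ _)) (le_max_right _ _)
  have hbnd : ∀ u : ℝ, ‖F u‖ ≤ 1 → ‖G u‖ ≤ K * ‖F u‖ := by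
    intro u hu
    have hN : 0 ≤ ‖F u‖ := norm_nonneg _
    obtain ⟨h1, h2, h3, h4⟩ := hcomp u
    have hy2 : (y u) ^ 2 ≤ 1 := by nlinarith [abs_nonneg (y u), sq_abs (y u)]
    have hz2 : (z u) ^ 2 ≤ 1 := by nlinarith [abs_nonneg (z u), sq_abs (z u)]
    rw [hGnorm]
    have hah : |ah| ≤ |ah - 1| + 1 := by
      calc |ah| = |(ah - 1) + 1| := by ring_nf
        _ ≤ |ah - 1| + |(1:ℝ)| := abs_add_le _ _
        _ = |ah - 1| + 1 := by norm_num
    have hK1 : (1:ℝ) ≤ K := by linarith [abs_nonneg (ah - 1)]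
    have e1 : |deriv y u| ≤ K * ‖F u‖ := le_trans h2 (le_mul_of_one_le_left hN hK1)
    have e2 : |deriv (deriv y) u| ≤ K * ‖F u‖ := by
      rw [hey u]
      have : |(ah - 1) * y u - 2 * y u * (y u ^ 2 - z u ^ 2)| ≤
          |ah - 1| * |y u| + 2 * |y u| * (y u ^ 2 + z u ^ 2) := by
        calc |(ah - 1) * y u - 2 * y u * (y u ^ 2 - z u ^ 2)|
            ≤ |(ah - 1) * y u| + |2 * y u * (y u ^ 2 - z u ^ 2)| := abs_sub _ _
          _ ≤ |ah - 1| * |y u| + 2 * |y u| * (y u ^ 2 + z u ^ 2) := by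
              rw [abs_mul, abs_mul, abs_mul, abs_two]
              gcongr
              calc |y u ^ 2 - z u ^ 2| ≤ |y u ^ 2| + |z u ^ 2| := abs_sub _ _
                _ = y u ^ 2 + z u ^ 2 := by rw [abs_of_nonneg (sq_nonneg _), abs_of_nonneg (sq_nonneg _)]
      refine le_trans this ?_
      have t1 : |ah - 1| * |y u| ≤ |ah - 1| * ‖F u‖ :=
        mul_le_mul_of_nonneg_left h1 (abs_nonneg _)
      have t2 : 2 * |y u| * (y u ^ 2 + z u ^ 2) ≤ 2 * ‖F u‖ * 2 := by
        apply mul_le_mul (by linarith) (by linarith) (by positivity) (by positivity)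
      have t3 : (|ah - 1| + 5) * ‖F u‖ ≤ K * ‖F u‖ := mul_le_mul_of_nonneg_right hK hN
      nlinarith [abs_nonneg (ah - 1)]
    have e3 : |deriv z u| ≤ K * ‖F u‖ := le_trans h4 (le_mul_of_one_le_left hN hK1)
    have e4 : |deriv (deriv z) u| ≤ K * ‖F u‖ := by
      rw [hez u]
      have : |ah * z u - 2 * z u * (y u ^ 2 - z u ^ 2)| ≤
          |ah| * |z u| + 2 * |z u| * (y u ^ 2 + z u ^ 2) := by
        calc |ah * z u - 2 * z u * (y u ^ 2 - z u ^ 2)|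
            ≤ |ah * z u| + |2 * z u * (y u ^ 2 - z u ^ 2)| := abs_sub _ _
          _ ≤ |ah| * |z u| + 2 * |z u| * (y u ^ 2 + z u ^ 2) := by
              rw [abs_mul, abs_mul, abs_mul, abs_two]
              gcongr
              calc |y u ^ 2 - z u ^ 2| ≤ |y u ^ 2| + |z u ^ 2| := abs_sub _ _
                _ = y u ^ 2 + z u ^ 2 := by rw [abs_of_nonneg (sq_nonneg _), abs_of_nonneg (sq_nonneg _)]
      refine le_trans this ?_
      have t1 : |ah| * |z u| ≤ (|ah - 1| + 1) * ‖F u‖ :=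
        mul_le_mul hah h3 (abs_nonneg _) (by positivity)
      have t2 : 2 * |z u| * (y u ^ 2 + z u ^ 2) ≤ 2 * ‖F u‖ * 2 := by
        apply mul_le_mul (by linarith) (by linarith) (by positivity) (by positivity)
      have t3 : (|ah - 1| + 5) * ‖F u‖ ≤ K * ‖F u‖ := mul_le_mul_of_nonneg_right hK hN
      linarith
    exact max_le e1 (max_le e2 (max_le e3 e4))
  have hF0 : ‖F 0‖ ≤ δ := by
    rw [hFnorm, hy0, hz0]
    simp only [abs_zero]
    exact max_le hδ (max_le hy'0 (max_le hδ hz'0))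
  have hFc : Continuous F := by
    rw [continuous_iff_continuousAt]
    exact fun u => (hF u).differentiableAt.continuousAt
  have hexp1 : (1:ℝ) ≤ Real.exp (5 * K) := by
    rw [Real.one_le_exp_iff]
    positivity
  -- claim: the norm stays ≤ 1 on [0,5]
  have key : ∀ u ∈ Icc (0:ℝ) 5, ‖F u‖ ≤ 1 := by
    by_contra hcon
    push_neg at hcon
    obtain ⟨u₀, hu₀, hu₀'⟩ := hcon
    set B : Set ℝ := Icc (0:ℝ) 5 ∩ {t | 1 ≤ ‖F t‖} with hBdef
    have hBne : B.Nonempty := ⟨u₀, hu₀, hu₀'.le⟩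
    have hBcl : IsClosed B := (isClosed_Icc).inter (isClosed_le continuous_const hFc.norm)
    have hBbd : BddBelow B := ⟨0, fun t ht => ht.1.1⟩
    set T := sInf B with hTdef
    have hTB : T ∈ B := hBcl.csInf_mem hBne hBbd
    have hlt : ∀ s₀ : ℝ, 0 ≤ s₀ → s₀ < T → ‖F s₀‖ ≤ 1 := by
      intro s₀ hs₀ hsT
      by_contra hc
      push_neg at hc
      have : s₀ ∈ B := ⟨⟨hs₀, le_trans (le_of_lt hsT) hTB.1.2⟩, hc.le⟩
      exact absurd this (notMem_of_lt_csInf hsT hBbd)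
    have grw := norm_le_gronwallBound_of_norm_deriv_right_le (f := F) (f' := G)
      (δ := δ) (K := K) (ε := 0) (a := 0) (b := T)
      (hFc.continuousOn)
      (fun x _ => (hF x).hasDerivWithinAt)
      hF0
      (fun x hx => by
        rw [add_zero]
        exact hbnd x (hlt x hx.1 hx.2))
    have hTT := grw T ⟨hTB.1.1, le_refl T⟩
    rw [sub_zero, gronwallBound_ε0] at hTT
    have : ‖F T‖ ≤ 1 / 2 := by
      refine le_trans hTT (le_trans ?_ hsmall)
      have : Real.exp (K * T) ≤ Real.exp (5 * K) := by
        apply Real.exp_le_exp.2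
        nlinarith [hTB.1.2, hKpos]
      nlinarith [mul_le_mul_of_nonneg_left this hδ]
    linarith [show (1:ℝ) ≤ ‖F T‖ from hTB.2]
  -- final Gronwall application
  have grw := norm_le_gronwallBound_of_norm_deriv_right_le (f := F) (f' := G)
    (δ := δ) (K := K) (ε := 0) (a := 0) (b := 5)
    (hFc.continuousOn)
    (fun x _ => (hF x).hasDerivWithinAt)
    hF0
    (fun x hx => by
      rw [add_zero]
      exact hbnd x (key x ⟨hx.1, hx.2.le⟩))
  intro u hu
  have h := grw u hu
  rw [sub_zero, gronwallBound_ε0] at h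
  have hF5 : ‖F u‖ ≤ δ * Real.exp (5 * K) := by
    refine le_trans h ?_
    have : Real.exp (K * u) ≤ Real.exp (5 * K) := by
      apply Real.exp_le_exp.2
      nlinarith [hu.2, hKpos]
    nlinarith
  obtain ⟨h1, h2, h3, h4⟩ := hcomp u
  exact ⟨le_trans h1 hF5, le_trans h2 hF5, le_trans h3 hF5, le_trans h4 hF5⟩

theorem tau_tends_to_pi_along_L (l : ℝ) (hl : 0 < l)
    (y z : ℝ → ℝ → ℝ)
    (hsys : ∀ r : ℝ, 0 < r →
      WenteSystem ((l - 2) * r) (y r) (z r) ∧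
      y r 0 = 0 ∧ z r 0 = 0 ∧
      deriv (y r) 0 = (1 + r) * Real.sqrt (l * r) ∧
      deriv (z r) 0 = r * Real.sqrt (l * r + 1)) :
    ∀ ϵ : ℝ, 0 < ϵ → ϵ < Real.pi →
      ∃ r₀ : ℝ, 0 < r₀ ∧ ∀ r : ℝ, 0 < r → r < r₀ →
        ∃ τ : ℝ, |τ - Real.pi| < ϵ ∧ y r τ = z r τ ∧
          ∀ u : ℝ, 0 < u → u < τ → z r u < y r u := by
  intro ϵ hϵ0 hϵπ
  have hπ1 : π < 3.15 := Real.pi_lt_d2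
  have hπ2 : 3.14 < π := Real.pi_gt_d2
  set K : ℝ := l + 8 with hKdef
  set C0 : ℝ := 2 * Real.sqrt (l + 1) with hC0def
  set M : ℝ := C0 * Real.exp (5 * K) with hMdef
  set C1 : ℝ := (l + 2) * M + 4 * M ^ 3 with hC1def
  set σ : ℝ := Real.sin (ϵ / 2) with hσdef
  have hσ : 0 < σ := Real.sin_pos_of_pos_of_lt_pi (by linarith) (by linarith)
  have hl1 : 0 < Real.sqrt (l + 1) := Real.sqrt_pos.2 (by linarith)
  have hsl : 0 < Real.sqrt l := Real.sqrt_pos.2 hl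
  have hM : 0 < M := by positivity
  have hC1 : 0 < C1 := by positivity
  have hπ0 : 0 < π := by linarith
  set d1 : ℝ := (Real.sqrt l * σ / (π * (Real.sqrt (l + 1) + 7 * C1))) ^ 2 with hd1def
  set d2 : ℝ := (Real.sqrt l * σ / (35 * C1)) ^ 2 with hd2def
  have hd1pos : 0 < d1 := by positivity
  have hd2pos : 0 < d2 := by positivity
  have h4M : 0 < 4 * M ^ 2 := by positivity
  clear_value K C0 M C1 σ d1 d2
  refine ⟨min 1 (min (1 / (4 * M ^ 2)) (min d1 d2)),
    lt_min one_pos (lt_min (div_pos one_pos h4M) (lt_min hd1pos hd2pos)), ?_⟩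
  intro r hr hrr₀
  have hr1 : r ≤ 1 := le_of_lt (lt_of_lt_of_le hrr₀ (min_le_left _ _))
  have hrM : r < 1 / (4 * M ^ 2) :=
    lt_of_lt_of_le hrr₀ (le_trans (min_le_right _ _) (min_le_left _ _))
  have hrd1 : r < d1 := lt_of_lt_of_le hrr₀
    (le_trans (min_le_right _ _) (le_trans (min_le_right _ _) (min_le_left _ _)))
  have hrd2 : r < d2 := lt_of_lt_of_le hrr₀
    (le_trans (min_le_right _ _) (le_trans (min_le_right _ _) (min_le_right _ _)))
  obtain ⟨hsys', hy0, hz0, hy'0, hz'0⟩ := hsys r hr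
  set Y : ℝ → ℝ := y r with hYdef
  set Z : ℝ → ℝ := z r with hZdef
  obtain ⟨hdy, hdy', hdz, hdz', hey, hez⟩ := hsys'
  set s : ℝ := Real.sqrt r with hsdef
  have hs0 : 0 < s := Real.sqrt_pos.2 hr
  have hsq : s * s = r := Real.mul_self_sqrt hr.le
  have hs1 : s ≤ 1 := by rw [hsdef, show (1:ℝ) = Real.sqrt 1 by simp]; exact Real.sqrt_le_sqrt hr1
  have hrs : r ≤ s := by
    calc r = s * s := hsq.symm
      _ ≤ s * 1 := mul_le_mul_of_nonneg_left hs1 hs0.le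
      _ = s := mul_one s
  -- from r < 1/(4M²): s < 1/(2M)
  have hsM : s < 1 / (2 * M) := by
    have h1 : r < (1 / (2 * M)) ^ 2 := by
      rw [div_pow]
      convert hrM using 2 <;> ring
    have h2 : s < Real.sqrt ((1 / (2 * M)) ^ 2) := Real.sqrt_lt_sqrt hr.le h1
    rwa [Real.sqrt_sq (by positivity)] at h2
  have hsd1 : s * (Real.sqrt (l + 1) + 7 * C1) < Real.sqrt l * σ / π := by
    set D : ℝ := Real.sqrt (l + 1) + 7 * C1 with hD
    have hDpos : 0 < D := by rw [hD]; linarith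
    have h1 : s < Real.sqrt l * σ / (π * D) := by
      have h0 : r < (Real.sqrt l * σ / (π * D)) ^ 2 := by rw [← hd1def]; exact hrd1
      have h2 : s < Real.sqrt ((Real.sqrt l * σ / (π * D)) ^ 2) := Real.sqrt_lt_sqrt hr.le h0
      rwa [Real.sqrt_sq (le_of_lt (div_pos (mul_pos hsl hσ) (mul_pos hπ0 hDpos)))] at h2
    have h2 : s * D < (Real.sqrt l * σ / (π * D)) * D := mul_lt_mul_of_pos_right h1 hDpos
    have h3 : (Real.sqrt l * σ / (π * D)) * D = Real.sqrt l * σ / π := by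
      field_simp
    calc s * D < (Real.sqrt l * σ / (π * D)) * D := h2
      _ = Real.sqrt l * σ / π := h3
  have hsd2 : 35 * C1 * s < Real.sqrt l * σ := by
    have h1 : s < Real.sqrt l * σ / (35 * C1) := by
      have h0 : r < (Real.sqrt l * σ / (35 * C1)) ^ 2 := by rw [← hd2def]; exact hrd2
      have h2 : s < Real.sqrt ((Real.sqrt l * σ / (35 * C1)) ^ 2) := Real.sqrt_lt_sqrt hr.le h0
      rwa [Real.sqrt_sq (le_of_lt (div_pos (mul_pos hsl hσ) (by linarith : (0:ℝ) < 35 * C1)))] at h2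
    have h2 : s * (35 * C1) < (Real.sqrt l * σ / (35 * C1)) * (35 * C1) :=
      mul_lt_mul_of_pos_right h1 (by linarith)
    have h3 : (Real.sqrt l * σ / (35 * C1)) * (35 * C1) = Real.sqrt l * σ := by
      field_simp
    calc 35 * C1 * s = s * (35 * C1) := by ring
      _ < (Real.sqrt l * σ / (35 * C1)) * (35 * C1) := h2
      _ = Real.sqrt l * σ := h3
  -- initial derivative values
  set v : ℝ := (1 + r) * Real.sqrt (l * r) with hvdef
  set w₀ : ℝ := r * Real.sqrt (l * r + 1) with hw₀def
  have hlr : Real.sqrt (l * r) = Real.sqrt l * s := Real.sqrt_mul hl.le r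
  have hvnn : 0 ≤ v := by positivity
  have hw₀nn : 0 ≤ w₀ := by positivity
  have hv_low : Real.sqrt l * s ≤ v := by
    rw [hvdef, hlr]
    have h := mul_le_mul_of_nonneg_right (show (1:ℝ) ≤ 1 + r by linarith)
      (mul_nonneg hsl.le hs0.le)
    calc Real.sqrt l * s = 1 * (Real.sqrt l * s) := (one_mul _).symm
      _ ≤ (1 + r) * (Real.sqrt l * s) := h
  have hv_up : v ≤ C0 * s := by
    rw [hvdef, hlr, hC0def]
    have h1 : Real.sqrt l ≤ Real.sqrt (l + 1) := Real.sqrt_le_sqrt (by linarith)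
    have h2 := mul_le_mul_of_nonneg_right (show (1 + r : ℝ) ≤ 2 by linarith)
      (mul_nonneg hsl.le hs0.le)
    have h3 := mul_le_mul_of_nonneg_right h1 hs0.le
    calc (1 + r) * (Real.sqrt l * s) ≤ 2 * (Real.sqrt l * s) := h2
      _ = 2 * (Real.sqrt l * s) := rfl
      _ ≤ 2 * (Real.sqrt (l + 1) * s) := by linarith
      _ = 2 * Real.sqrt (l + 1) * s := by ring
  have hw₀_up : w₀ ≤ s * s * Real.sqrt (l + 1) := by
    have h1 : Real.sqrt (l * r + 1) ≤ Real.sqrt (l + 1) :=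
      Real.sqrt_le_sqrt (by
        have := mul_le_mul_of_nonneg_left hr1 hl.le
        linarith)
    calc w₀ = r * Real.sqrt (l * r + 1) := hw₀def
      _ ≤ r * Real.sqrt (l + 1) := mul_le_mul_of_nonneg_left h1 hr.le
      _ = s * s * Real.sqrt (l + 1) := by rw [hsq]
  have hw₀C0 : w₀ ≤ C0 * s := by
    rw [hC0def]
    have h2 := mul_le_mul_of_nonneg_right (mul_le_mul_of_nonneg_right hs1 hs0.le) hl1.le
    have h3 : (0:ℝ) ≤ Real.sqrt (l + 1) * s := mul_nonneg hl1.le hs0.le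
    calc w₀ ≤ s * s * Real.sqrt (l + 1) := hw₀_up
      _ ≤ 1 * s * Real.sqrt (l + 1) := h2
      _ = Real.sqrt (l + 1) * s := by ring
      _ ≤ 2 * Real.sqrt (l + 1) * s := by linarith
      _ = 2 * Real.sqrt (l + 1) * s := rfl
  -- apply the apriori bound with δ = C0 * s
  have hC0pos : 0 < C0 := by rw [hC0def]; positivity
  have hKb : |(l - 2) * r - 1| + 5 ≤ K := by
    have h1 : |(l - 2) * r| ≤ (l + 2) * r := by
      rw [abs_mul, abs_of_nonneg hr.le]
      have h4 : |l - 2| ≤ l + 2 := abs_le.2 ⟨by linarith, by linarith⟩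
      exact mul_le_mul_of_nonneg_right h4 hr.le
    have h2 : |(l - 2) * r - 1| ≤ |(l - 2) * r| + 1 := by
      calc |(l - 2) * r - 1| ≤ |(l - 2) * r| + |(1:ℝ)| := abs_sub _ _
        _ = |(l - 2) * r| + 1 := by norm_num
    rw [hKdef]
    have h5 := mul_le_mul_of_nonneg_left hr1 (show (0:ℝ) ≤ l + 2 by linarith)
    linarith
  have hsmall : (C0 * s) * Real.exp (5 * K) ≤ 1 / 2 := by
    have he : C0 * s * Real.exp (5 * K) = M * s := by rw [hMdef]; ring
    rw [he]
    have h2M : 0 < 2 * M := by linarith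
    have h2 : s * (2 * M) < 1 := (lt_div_iff₀ h2M).1 hsM
    have h3 : M * s = s * (2 * M) / 2 := by ring
    linarith
  have hbd := apriori ((l - 2) * r) K (C0 * s) Y Z
    ⟨hdy, hdy', hdz, hdz', hey, hez⟩ hy0 hz0 hKb
    (by rw [hy'0, abs_of_nonneg hvnn]; exact hv_up)
    (by rw [hz'0, abs_of_nonneg hw₀nn]; exact hw₀C0)
    hsmall
  set m : ℝ := C0 * s * Real.exp (5 * K) with hmdef
  have hmM : m = M * s := by rw [hmdef, hMdef]; ring
  have hm0 : 0 ≤ m := by rw [hmM]; exact (mul_pos hM hs0).le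
  set ε₁ : ℝ := C1 * (r * s) with hε₁def
  have hε₁0 : 0 < ε₁ := by rw [hε₁def]; exact mul_pos hC1 (mul_pos hr hs0)
  -- forcing bounds
  have hgen : ∀ a b d : ℝ, |a| ≤ (l + 2) * r → |b| ≤ m → |d| ≤ 2 * m ^ 2 →
      |a * b - 2 * b * d| ≤ ε₁ := by
    intro a b d ha hb hd
    have h0 : |a * b - 2 * b * d| ≤ |a| * |b| + 2 * |b| * |d| := by
      calc |a * b - 2 * b * d| ≤ |a * b| + |2 * b * d| := abs_sub _ _
        _ = |a| * |b| + 2 * |b| * |d| := by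
            rw [abs_mul, abs_mul, abs_mul, abs_two]
    have t1 : |a| * |b| ≤ (l + 2) * r * m :=
      mul_le_mul ha hb (abs_nonneg _) (mul_nonneg (by linarith : (0:ℝ) ≤ l + 2) hr.le)
    have t2 : 2 * |b| * |d| ≤ 2 * m * (2 * m ^ 2) := by
      apply mul_le_mul (by linarith [abs_nonneg b]) hd (abs_nonneg _) (by linarith [hm0])
    have teq : (l + 2) * r * m + 2 * m * (2 * m ^ 2) = ε₁ := by
      rw [hε₁def, hC1def, hmM, ← hsq]
      ring
    linarith
  have har : |(l - 2) * r| ≤ (l + 2) * r := by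
    rw [abs_mul, abs_of_nonneg hr.le]
    have h4 : |l - 2| ≤ l + 2 := abs_le.2 ⟨by linarith, by linarith⟩
    exact mul_le_mul_of_nonneg_right h4 hr.le
  have hsqbd : ∀ u ∈ Icc (0:ℝ) 5, |Y u ^ 2 - Z u ^ 2| ≤ 2 * m ^ 2 := by
    intro u hu
    obtain ⟨b1, b2, b3, b4⟩ := hbd u hu
    have h1 : Y u ^ 2 ≤ m ^ 2 := by
      rw [← sq_abs (Y u)]
      exact pow_le_pow_left₀ (abs_nonneg _) b1 2
    have h2 : Z u ^ 2 ≤ m ^ 2 := by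
      rw [← sq_abs (Z u)]
      exact pow_le_pow_left₀ (abs_nonneg _) b3 2
    rw [abs_le]
    constructor
    · linarith [sq_nonneg (Y u)]
    · linarith [sq_nonneg (Z u)]
  have hforceY : ∀ u ∈ Icc (0:ℝ) 5, |deriv (deriv Y) u + Y u| ≤ ε₁ := by
    intro u hu
    obtain ⟨b1, b2, b3, b4⟩ := hbd u hu
    have hrw : deriv (deriv Y) u + Y u =
        ((l - 2) * r) * Y u - 2 * Y u * (Y u ^ 2 - Z u ^ 2) := by
      rw [hey u]; ring
    rw [hrw]
    exact hgen _ _ _ har b1 (hsqbd u hu)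
  have hforceZ : ∀ u ∈ Icc (0:ℝ) 5, |deriv (deriv Z) u| ≤ ε₁ := by
    intro u hu
    obtain ⟨b1, b2, b3, b4⟩ := hbd u hu
    rw [hez u]
    exact hgen _ _ _ har b3 (hsqbd u hu)
  have hys := linY Y v ε₁ hdy hdy' hy0 hy'0 hforceY
  have hzs := linZ Z w₀ ε₁ hε₁0.le hdz hdz' hz0 hz'0 hforceZ
  set α : ℝ := π - ϵ / 2 with hαdef
  set u₁ : ℝ := π + ϵ / 2 with hu₁def
  have hα0 : 0 < α := by rw [hαdef]; linarith
  have hαπ : α ≤ π := by rw [hαdef]; linarith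
  have hα5 : α ≤ 5 := by rw [hαdef]; linarith
  have hu₁5 : u₁ ≤ 5 := by rw [hu₁def]; linarith
  have hu₁0 : 0 ≤ u₁ := by rw [hu₁def]; linarith
  have hαu₁ : α ≤ u₁ := by rw [hαdef, hu₁def]; linarith
  have hsinα : Real.sin α = σ := by rw [hαdef, Real.sin_pi_sub, hσdef]
  have hsinu₁ : Real.sin u₁ = -σ := by
    rw [hu₁def, Real.sin_add, Real.sin_pi, Real.cos_pi, hσdef]
    ring
  -- positivity of Y - Z on (0, α]
  have hpos : ∀ u : ℝ, 0 < u → u ≤ α → Z u < Y u := by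
    intro u hu0 huα
    have huI : u ∈ Icc (0:ℝ) 5 := ⟨hu0.le, by linarith⟩
    have h1 := (abs_le.1 (hys u huI)).1
    have h2 := (abs_le.1 (hzs u huI)).2
    have hsin : σ / π * u ≤ Real.sin u := by
      have hlow := sin_lower α hα0 hαπ u ⟨hu0.le, huα⟩
      rw [hsinα] at hlow
      have hcmp : σ / π ≤ σ / α := div_le_div_of_nonneg_left hσ.le hα0 hαπ
      have := mul_le_mul_of_nonneg_right hcmp hu0.le
      linarith
    have hsin0 : 0 ≤ σ / π * u := mul_nonneg (div_nonneg hσ.le hπ0.le) hu0.le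
    have hvs : Real.sqrt l * s * (σ / π * u) ≤ v * Real.sin u :=
      mul_le_mul hv_low hsin hsin0 hvnn
    have hzup : w₀ * u ≤ s * s * Real.sqrt (l + 1) * u :=
      mul_le_mul_of_nonneg_right hw₀_up hu0.le
    have hε₁u : ε₁ * u ≤ C1 * (s * s) * u := by
      have h3 : r * s ≤ s * s := mul_le_mul_of_nonneg_right hrs hs0.le
      have h4 : C1 * (r * s) ≤ C1 * (s * s) := mul_le_mul_of_nonneg_left h3 hC1.le
      exact mul_le_mul_of_nonneg_right (by rw [hε₁def]; exact h4) hu0.le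
    have hbr : s * (Real.sqrt (l + 1) + 7 * C1) < Real.sqrt l * (σ / π) := by
      have he : Real.sqrt l * σ / π = Real.sqrt l * (σ / π) := by ring
      linarith [hsd1]
    have hkey := mul_lt_mul_of_pos_left hbr (mul_pos hs0 hu0)
    have hm1 : s * u * (s * (Real.sqrt (l + 1) + 7 * C1)) =
        s * s * Real.sqrt (l + 1) * u + 7 * (C1 * (s * s) * u) := by ring
    have hm2 : s * u * (Real.sqrt l * (σ / π)) = Real.sqrt l * s * (σ / π * u) := by ring
    linarith
  -- negativity at u₁
  have hneg : Y u₁ < Z u₁ := by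
    have huI : u₁ ∈ Icc (0:ℝ) 5 := ⟨hu₁0, hu₁5⟩
    have h1 := (abs_le.1 (hys u₁ huI)).2
    have h2 := (abs_le.1 (hzs u₁ huI)).1
    have hvs : v * Real.sin u₁ ≤ Real.sqrt l * s * (-σ) := by
      rw [hsinu₁]
      have := mul_le_mul_of_nonpos_right hv_low (neg_nonpos.2 hσ.le)
      linarith
    have hε₁u : ε₁ * u₁ ≤ 5 * ε₁ := by
      have := mul_le_mul_of_nonneg_left hu₁5 hε₁0.le
      linarith
    have hε₁s : 35 * ε₁ ≤ 35 * (C1 * (s * s)) := by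
      have h3 : r * s ≤ s * s := mul_le_mul_of_nonneg_right hrs hs0.le
      have h4 : C1 * (r * s) ≤ C1 * (s * s) := mul_le_mul_of_nonneg_left h3 hC1.le
      rw [hε₁def]
      linarith
    have hkey : 35 * (C1 * (s * s)) < Real.sqrt l * s * σ := by
      have h5 := mul_lt_mul_of_pos_right hsd2 hs0
      have h6 : 35 * C1 * s * s = 35 * (C1 * (s * s)) := by ring
      have h7 : Real.sqrt l * σ * s = Real.sqrt l * s * σ := by ring
      linarith
    have hwu : 0 ≤ w₀ * u₁ := mul_nonneg hw₀nn hu₁0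
    linarith
  -- intermediate value argument
  set W : ℝ → ℝ := fun u => Y u - Z u with hWdef
  have hWc : Continuous W := by
    have hYc : Continuous Y := by
      rw [continuous_iff_continuousAt]
      exact fun u => (hdy u).continuousAt
    have hZc : Continuous Z := by
      rw [continuous_iff_continuousAt]
      exact fun u => (hdz u).continuousAt
    exact hYc.sub hZc
  have hWα : 0 < W α := sub_pos.2 (hpos α hα0 (le_refl α))
  have hWu₁ : W u₁ < 0 := sub_neg.2 hneg
  have hivt := intermediate_value_Icc' hαu₁ hWc.continuousOn
  obtain ⟨x₀, hx₀I, hx₀⟩ := hivt (⟨hWu₁.le, hWα.le⟩ : (0:ℝ) ∈ Icc (W u₁) (W α))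
  set Zs : Set ℝ := Icc α u₁ ∩ W ⁻¹' {0} with hZsdef
  have hZsne : Zs.Nonempty := ⟨x₀, hx₀I, by simpa using hx₀⟩
  have hZscl : IsClosed Zs := isClosed_Icc.inter (isClosed_singleton.preimage hWc)
  have hZsbd : BddBelow Zs := ⟨α, fun t ht => ht.1.1⟩
  set τ : ℝ := sInf Zs with hτdef
  have hτZ : τ ∈ Zs := hZscl.csInf_mem hZsne hZsbd
  have hτI : τ ∈ Icc α u₁ := hτZ.1
  have hWτ : W τ = 0 := hτZ.2
  refine ⟨τ, ?_, ?_, ?_⟩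
  · rw [abs_sub_lt_iff]
    constructor
    · have := hτI.2
      rw [hu₁def] at this
      linarith
    · have := hτI.1
      rw [hαdef] at this
      linarith
  · have : Y τ - Z τ = 0 := hWτ
    rw [hYdef, hZdef] at this
    linarith
  · intro u hu0 huτ
    rcases le_or_gt u α with h | h
    · exact hpos u hu0 h
    · have huI : u ∈ Icc α u₁ := ⟨h.le, le_trans huτ.le hτI.2⟩
      have hune : W u ≠ 0 := by
        intro hWu
        have : u ∈ Zs := ⟨huI, by simpa using hWu⟩
        exact absurd this (notMem_of_lt_csInf huτ hZsbd)
      have hWu : 0 < W u := by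
        rcases lt_or_gt_of_ne hune with hneg' | hpos'
        · exfalso
          have hivt2 := intermediate_value_Icc' h.le hWc.continuousOn
          obtain ⟨x₁, hx₁I, hx₁⟩ := hivt2 (⟨hneg'.le, hWα.le⟩ : (0:ℝ) ∈ Icc (W u) (W α))
          have hx₁Z : x₁ ∈ Zs := ⟨⟨hx₁I.1, le_trans hx₁I.2 huI.2⟩, by simpa using hx₁⟩
          have : τ ≤ x₁ := csInf_le hZsbd hx₁Z
          linarith [hx₁I.2]
        · exact hpos'
      have : (0:ℝ) < Y u - Z u := hWu
      rw [hYdef, hZdef] at this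
      linarith
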